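/- Let u, v, w be 2×2 complex matrices satisfying ⁅u,v⁆ = w, ⁅v,w⁆ = u and ⁅w,u⁆ = v, and let α, β be real numbers with sin(α/2) ≠ 0. Then, as ε → 0, the difference exp(α•u) · exp((ε·β)•v) − exp(α•u + (ε·β·α/2)•(cot(α/2) • v + w)) is O(ε²) (in any matrix norm). -/

import Mathlib

open NormedSpace

/-- The `ℚ`-algebra structure obtained by restricting scalars from `ℝ`. -/
@[reducible]
noncomputable def myRatAlg {𝔸 : Type*} [NormedRing 𝔸] [NormedAlgebra ℝ 𝔸] : NormedAlgebra ℚ 𝔸 :=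
  NormedAlgebra.restrictScalars ℚ ℝ 𝔸

attribute [local instance] myRatAlg

section General

variable {𝔸 : Type*} [NormedRing 𝔸] [NormedAlgebra ℝ 𝔸] [CompleteSpace 𝔸] [NormOneClass 𝔸]

lemma my_norm_exp_le (x : 𝔸) : ‖exp x‖ ≤ Real.exp ‖x‖ := by
  rw [Real.exp_eq_exp_ℝ, exp_eq_tsum ℝ, exp_eq_tsum ℝ]
  refine (norm_tsum_le_tsum_norm (norm_expSeries_summable' x)).trans ?_
  refine (norm_expSeries_summable' (𝕂 := ℝ) x).tsum_le_tsum (fun n => ?_)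
    (expSeries_summable' (𝕂 := ℝ) ‖x‖)
  rw [norm_smul, Real.norm_eq_abs, abs_inv, Nat.abs_cast, smul_eq_mul]
  gcongr
  exact norm_pow_le x n

lemma my_exp_mul_exp_neg (A : 𝔸) : exp A * exp (-A) = 1 := by
  rw [← exp_add_of_commute (Commute.refl A).neg_right]
  simp

lemma my_exp_neg_mul_exp (A : 𝔸) : exp (-A) * exp A = 1 := by
  rw [← exp_add_of_commute (Commute.refl A).neg_left]
  simp

lemma rot_aux (u a b : 𝔸) (hab : u * a = a * u + b) (hba : u * b = b * u - a) (θ : ℝ) :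
    exp (θ • u) * a = (Real.cos θ • a + Real.sin θ • b) * exp (θ • u) := by
  set F : ℝ → 𝔸 := fun t =>
    exp (t • (-u)) * ((Real.cos t • a + Real.sin t • b) * exp (t • u)) with hF
  have hder : ∀ t : ℝ, HasDerivAt F 0 t := by
    intro t
    have h1 := hasDerivAt_exp_smul_const (𝕂 := ℝ) (-u) t
    have h3 := hasDerivAt_exp_smul_const' (𝕂 := ℝ) u t
    have h2 : HasDerivAt (fun t : ℝ => Real.cos t • a + Real.sin t • b)
        ((-Real.sin t) • a + Real.cos t • b) t :=
      ((Real.hasDerivAt_cos t).smul_const a).add ((Real.hasDerivAt_sin t).smul_const b)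
    have h := h1.mul (h2.mul h3)
    convert h using 1
    · rfl
    simp only [Pi.mul_apply]
    have expand : exp (t • (-u)) * (-u) * ((Real.cos t • a + Real.sin t • b) * exp (t • u)) +
        exp (t • (-u)) * (((-Real.sin t) • a + Real.cos t • b) * exp (t • u) +
          (Real.cos t • a + Real.sin t • b) * (u * exp (t • u))) =
        exp (t • (-u)) *
          (((-u) * (Real.cos t • a + Real.sin t • b) +
            ((-Real.sin t) • a + Real.cos t • b) +
            (Real.cos t • a + Real.sin t • b) * u) * exp (t • u)) := by
      noncomm_ring
    rw [expand]
    have inner : (-u) * (Real.cos t • a + Real.sin t • b) +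
        ((-Real.sin t) • a + Real.cos t • b) +
        (Real.cos t • a + Real.sin t • b) * u = 0 := by
      simp only [mul_add, add_mul, neg_mul, mul_smul_comm, smul_mul_assoc, hab, hba]
      module
    rw [inner]
    simp
  have hconst : ∀ t : ℝ, F t = F 0 := fun t =>
    is_const_of_deriv_eq_zero (fun s => (hder s).differentiableAt)
      (fun s => (hder s).deriv) t 0
  have hF0 : F 0 = a := by simp [hF]
  have hFθ := (hconst θ).trans hF0
  have key : exp (θ • u) * F θ = exp (θ • u) * a := by rw [hFθ]
  rw [hF] at key
  simp only [] at key
  rw [← mul_assoc, smul_neg] at key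
  rw [my_exp_mul_exp_neg (θ • u), one_mul] at key
  exact key.symm

lemma rot_conj (u a b : 𝔸) (hab : u * a = a * u + b) (hba : u * b = b * u - a) (θ : ℝ) :
    exp ((-θ) • u) * (a * exp (θ • u)) = Real.cos θ • a - Real.sin θ • b := by
  have h := rot_aux u a b hab hba (-θ)
  rw [Real.cos_neg, Real.sin_neg] at h
  have h2 : Real.cos θ • a + (-Real.sin θ) • b = Real.cos θ • a - Real.sin θ • b := by
    module
  rw [h2] at h
  rw [← mul_assoc, h, mul_assoc]
  rw [show exp ((-θ) • u) * exp (θ • u) = 1 from by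
    rw [show ((-θ) • u : 𝔸) = -(θ • u) by rw [neg_smul]]; exact my_exp_neg_mul_exp _, mul_one]

end General

section General2

variable {𝔸 : Type*} [NormedRing 𝔸] [NormedAlgebra ℝ 𝔸] [CompleteSpace 𝔸] [NormOneClass 𝔸]

lemma my_duhamel (A X : 𝔸) :
    exp (A + X) - exp A =
      ∫ s in (0:ℝ)..1, exp A * (exp (s • (-A)) * (X * exp (s • (A + X)))) := by
  have hder : ∀ s : ℝ,
      HasDerivAt (fun t : ℝ => exp A * (exp (t • (-A)) * exp (t • (A + X))))
        (exp A * (exp (s • (-A)) * (X * exp (s • (A + X))))) s := by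
    intro s
    have h1 := hasDerivAt_exp_smul_const (𝕂 := ℝ) (-A) s
    have h2 := hasDerivAt_exp_smul_const' (𝕂 := ℝ) (A + X) s
    have h := (h1.mul h2).const_mul (exp A)
    convert h using 1
    · rfl
    noncomm_ring
  have c1 : Continuous fun s : ℝ => exp (s • (-A)) :=
    exp_continuous.comp (continuous_id.smul continuous_const)
  have c2 : Continuous fun s : ℝ => exp (s • (A + X)) :=
    exp_continuous.comp (continuous_id.smul continuous_const)
  have hcont : Continuous fun s : ℝ =>
      exp A * (exp (s • (-A)) * (X * exp (s • (A + X)))) :=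
    continuous_const.mul (c1.mul (continuous_const.mul c2))
  have hint := intervalIntegral.integral_eq_sub_of_hasDerivAt
    (f := fun t : ℝ => exp A * (exp (t • (-A)) * exp (t • (A + X))))
    (fun s _ => hder s) (hcont.intervalIntegrable 0 1)
  rw [hint]
  simp only [one_smul, zero_smul, exp_zero, mul_one, one_mul]
  rw [← mul_assoc, my_exp_mul_exp_neg A, one_mul]

lemma my_D2 (A X : 𝔸) :
    ‖exp (A + X) - exp A‖ ≤
      ‖X‖ * (Real.exp ‖A‖ * Real.exp ‖A‖ * Real.exp (‖A‖ + ‖X‖)) := by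
  rw [my_duhamel]
  have hb : ∀ s ∈ Set.uIoc (0:ℝ) 1,
      ‖exp A * (exp (s • (-A)) * (X * exp (s • (A + X))))‖ ≤
        ‖X‖ * (Real.exp ‖A‖ * Real.exp ‖A‖ * Real.exp (‖A‖ + ‖X‖)) := by
    intro s hs
    rw [Set.uIoc_of_le zero_le_one] at hs
    obtain ⟨hs0, hs1⟩ := hs
    have hsabs : |s| ≤ 1 := by rw [abs_of_pos hs0]; exact hs1
    have b1 : ‖exp A‖ ≤ Real.exp ‖A‖ := my_norm_exp_le A
    have b2 : ‖exp (s • (-A))‖ ≤ Real.exp ‖A‖ := by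
      refine (my_norm_exp_le _).trans (Real.exp_le_exp.2 ?_)
      rw [norm_smul, Real.norm_eq_abs, norm_neg]
      calc |s| * ‖A‖ ≤ 1 * ‖A‖ := by gcongr
        _ = ‖A‖ := one_mul _
    have b3 : ‖exp (s • (A + X))‖ ≤ Real.exp (‖A‖ + ‖X‖) := by
      refine (my_norm_exp_le _).trans (Real.exp_le_exp.2 ?_)
      rw [norm_smul, Real.norm_eq_abs]
      calc |s| * ‖A + X‖ ≤ 1 * (‖A‖ + ‖X‖) := by
            gcongr
            exact norm_add_le _ _
        _ = ‖A‖ + ‖X‖ := one_mul _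
    calc ‖exp A * (exp (s • (-A)) * (X * exp (s • (A + X))))‖ ≤
          ‖exp A‖ * (‖exp (s • (-A))‖ * (‖X‖ * ‖exp (s • (A + X))‖)) := by
            refine (norm_mul_le _ _).trans ?_
            refine mul_le_mul_of_nonneg_left ?_ (norm_nonneg _)
            refine (norm_mul_le _ _).trans ?_
            refine mul_le_mul_of_nonneg_left ?_ (norm_nonneg _)
            exact norm_mul_le _ _
      _ ≤ Real.exp ‖A‖ * (Real.exp ‖A‖ * (‖X‖ * Real.exp (‖A‖ + ‖X‖))) := by
            gcongr
      _ = ‖X‖ * (Real.exp ‖A‖ * Real.exp ‖A‖ * Real.exp (‖A‖ + ‖X‖)) := by ring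
  have := intervalIntegral.norm_integral_le_of_norm_le_const hb
  simpa using this

lemma my_D3 (A X : 𝔸) :
    ‖exp (A + X) - exp A -
        ∫ s in (0:ℝ)..1, exp A * (exp (s • (-A)) * (X * exp (s • A)))‖ ≤
      ‖X‖ ^ 2 * (Real.exp ‖A‖ * Real.exp ‖A‖ *
        (Real.exp ‖A‖ * Real.exp ‖A‖ * Real.exp (‖A‖ + ‖X‖))) := by
  have c1 : Continuous fun s : ℝ => exp A * (exp (s • (-A)) * (X * exp (s • (A + X)))) :=
    continuous_const.mul ((exp_continuous.comp (continuous_id.smul continuous_const)).mul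
      (continuous_const.mul (exp_continuous.comp (continuous_id.smul continuous_const))))
  have c2 : Continuous fun s : ℝ => exp A * (exp (s • (-A)) * (X * exp (s • A))) :=
    continuous_const.mul ((exp_continuous.comp (continuous_id.smul continuous_const)).mul
      (continuous_const.mul (exp_continuous.comp (continuous_id.smul continuous_const))))
  rw [my_duhamel]
  rw [← intervalIntegral.integral_sub (c1.intervalIntegrable 0 1) (c2.intervalIntegrable 0 1)]
  have hb : ∀ s ∈ Set.uIoc (0:ℝ) 1,
      ‖exp A * (exp (s • (-A)) * (X * exp (s • (A + X)))) -
        exp A * (exp (s • (-A)) * (X * exp (s • A)))‖ ≤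
        ‖X‖ ^ 2 * (Real.exp ‖A‖ * Real.exp ‖A‖ *
          (Real.exp ‖A‖ * Real.exp ‖A‖ * Real.exp (‖A‖ + ‖X‖))) := by
    intro s hs
    rw [Set.uIoc_of_le zero_le_one] at hs
    obtain ⟨hs0, hs1⟩ := hs
    have hsabs : |s| ≤ 1 := by rw [abs_of_pos hs0]; exact hs1
    have hre : exp A * (exp (s • (-A)) * (X * exp (s • (A + X)))) -
        exp A * (exp (s • (-A)) * (X * exp (s • A))) =
        exp A * (exp (s • (-A)) * (X * (exp (s • (A + X)) - exp (s • A)))) := by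
      noncomm_ring
    rw [hre]
    have b1 : ‖exp A‖ ≤ Real.exp ‖A‖ := my_norm_exp_le A
    have b2 : ‖exp (s • (-A))‖ ≤ Real.exp ‖A‖ := by
      refine (my_norm_exp_le _).trans (Real.exp_le_exp.2 ?_)
      rw [norm_smul, Real.norm_eq_abs, norm_neg]
      calc |s| * ‖A‖ ≤ 1 * ‖A‖ := by gcongr
        _ = ‖A‖ := one_mul _
    have b4 : ‖exp (s • (A + X)) - exp (s • A)‖ ≤
        ‖X‖ * (Real.exp ‖A‖ * Real.exp ‖A‖ * Real.exp (‖A‖ + ‖X‖)) := by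
      have hsm : s • (A + X) = s • A + s • X := smul_add s A X
      rw [hsm]
      refine (my_D2 (s • A) (s • X)).trans ?_
      have e1 : ‖s • X‖ ≤ ‖X‖ := by
        rw [norm_smul, Real.norm_eq_abs]
        calc |s| * ‖X‖ ≤ 1 * ‖X‖ := by gcongr
          _ = ‖X‖ := one_mul _
      have e2 : ‖s • A‖ ≤ ‖A‖ := by
        rw [norm_smul, Real.norm_eq_abs]
        calc |s| * ‖A‖ ≤ 1 * ‖A‖ := by gcongr
          _ = ‖A‖ := one_mul _
      gcongr
    calc ‖exp A * (exp (s • (-A)) * (X * (exp (s • (A + X)) - exp (s • A))))‖ ≤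
          ‖exp A‖ * (‖exp (s • (-A))‖ * (‖X‖ *
            ‖exp (s • (A + X)) - exp (s • A)‖)) := by
            refine (norm_mul_le _ _).trans ?_
            refine mul_le_mul_of_nonneg_left ?_ (norm_nonneg _)
            refine (norm_mul_le _ _).trans ?_
            refine mul_le_mul_of_nonneg_left ?_ (norm_nonneg _)
            exact norm_mul_le _ _
      _ ≤ Real.exp ‖A‖ * (Real.exp ‖A‖ * (‖X‖ *
            (‖X‖ * (Real.exp ‖A‖ * Real.exp ‖A‖ * Real.exp (‖A‖ + ‖X‖))))) := by
            gcongr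
      _ = ‖X‖ ^ 2 * (Real.exp ‖A‖ * Real.exp ‖A‖ *
            (Real.exp ‖A‖ * Real.exp ‖A‖ * Real.exp (‖A‖ + ‖X‖))) := by ring
  have := intervalIntegral.norm_integral_le_of_norm_le_const hb
  simpa using this

lemma my_Dz (X : 𝔸) : ‖exp X - 1 - X‖ ≤ ‖X‖ ^ 2 * Real.exp ‖X‖ := by
  have h := my_D3 (0 : 𝔸) X
  simp only [zero_add, exp_zero, one_mul, neg_zero, smul_zero, mul_one, norm_zero,
    Real.exp_zero] at h
  rwa [intervalIntegral.integral_const, sub_zero, one_smul] at h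

end General2

section General3

variable {𝔸 : Type*} [NormedRing 𝔸] [NormedAlgebra ℝ 𝔸] [CompleteSpace 𝔸] [NormOneClass 𝔸]

lemma my_int_cos {α : ℝ} (hα0 : α ≠ 0) :
    (∫ s in (0:ℝ)..1, Real.cos (s * α)) = Real.sin α / α := by
  rw [intervalIntegral.integral_comp_mul_right Real.cos hα0]
  simp [integral_cos, div_eq_inv_mul]

lemma my_int_sin {α : ℝ} (hα0 : α ≠ 0) :
    (∫ s in (0:ℝ)..1, Real.sin (s * α)) = (1 - Real.cos α) / α := by
  rw [intervalIntegral.integral_comp_mul_right Real.sin hα0]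
  simp [integral_sin, div_eq_inv_mul]

lemma my_I1 (u v w : 𝔸) (huv : ⁅u, v⁆ = w) (hwu : ⁅w, u⁆ = v) (α β : ℝ)
    (hα : Real.sin (α / 2) ≠ 0) (ε : ℝ) :
    (∫ s in (0:ℝ)..1, exp (α • u) * (exp (s • (-(α • u))) *
        ((ε • ((β * α / 2) • (Real.cot (α / 2) • v + w))) * exp (s • (α • u))))) =
      (ε * β) • (exp (α • u) * v) := by
  have hα0 : α ≠ 0 := by
    intro h
    apply hα
    rw [h]
    norm_num
  -- bracket facts
  have h1 : u * v - v * u = w := by rw [← Ring.lie_def]; exact huv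
  have h2 : w * u - u * w = v := by rw [← Ring.lie_def]; exact hwu
  have hab_v : u * v = v * u + w := sub_eq_iff_eq_add'.mp h1
  have huw : u * w = w * u - v := by
    have h3 : w * u = u * w + v := sub_eq_iff_eq_add'.mp h2
    rw [h3, add_sub_cancel_right]
  have hab_w : u * w = w * u + -v := by rw [huw, sub_eq_add_neg]
  have hba_w : u * (-v) = (-v) * u - w := by
    rw [mul_neg, neg_mul, hab_v]
    abel
  have hba_v : u * w = w * u - v := huw
  -- pointwise form of the integrand
  have hpt : ∀ s : ℝ, exp (α • u) * (exp (s • (-(α • u))) *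
      ((ε • ((β * α / 2) • (Real.cot (α / 2) • v + w))) * exp (s • (α • u)))) =
      ((ε * (β * α / 2)) * (Real.cot (α / 2) * Real.cos (s * α) + Real.sin (s * α))) •
        (exp (α • u) * v) +
      ((ε * (β * α / 2)) * (Real.cos (s * α) - Real.cot (α / 2) * Real.sin (s * α))) •
        (exp (α • u) * w) := by
    intro s
    have hs1 : s • (α • u) = (s * α) • u := smul_smul s α u
    have hs2 : s • (-(α • u)) = (-(s * α)) • u := by
      rw [smul_neg, smul_smul, ← neg_smul]
    rw [hs1, hs2]
    have hv := rot_conj u v w hab_v hba_v (s * α)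
    have hw := rot_conj u w (-v) hab_w hba_w (s * α)
    have hm : exp ((-(s * α)) • u) *
        ((ε • ((β * α / 2) • (Real.cot (α / 2) • v + w))) * exp ((s * α) • u)) =
        (ε * (β * α / 2)) • (Real.cot (α / 2) •
          (exp ((-(s * α)) • u) * (v * exp ((s * α) • u))) +
          exp ((-(s * α)) • u) * (w * exp ((s * α) • u))) := by
      simp only [smul_smul, smul_add, add_mul, smul_mul_assoc, mul_smul_comm, mul_add]
      module
    rw [hm, hv, hw]
    simp only [mul_add, mul_sub, mul_smul_comm, mul_neg, smul_neg, smul_sub, smul_add,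
      smul_smul, sub_neg_eq_add]
    module
  simp only [hpt]
  have hi1 : IntervalIntegrable (fun s : ℝ =>
      ((ε * (β * α / 2)) * (Real.cot (α / 2) * Real.cos (s * α) + Real.sin (s * α))) •
        (exp (α • u) * v)) MeasureTheory.volume 0 1 := by
    apply Continuous.intervalIntegrable
    fun_prop
  have hi2 : IntervalIntegrable (fun s : ℝ =>
      ((ε * (β * α / 2)) * (Real.cos (s * α) - Real.cot (α / 2) * Real.sin (s * α))) •
        (exp (α • u) * w)) MeasureTheory.volume 0 1 := by
    apply Continuous.intervalIntegrable
    fun_prop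
  rw [intervalIntegral.integral_add hi1 hi2, intervalIntegral.integral_smul_const,
    intervalIntegral.integral_smul_const]
  have hic : IntervalIntegrable (fun s : ℝ => Real.cot (α / 2) * Real.cos (s * α))
      MeasureTheory.volume 0 1 := by
    apply Continuous.intervalIntegrable; fun_prop
  have his : IntervalIntegrable (fun s : ℝ => Real.sin (s * α)) MeasureTheory.volume 0 1 := by
    apply Continuous.intervalIntegrable; fun_prop
  have hic2 : IntervalIntegrable (fun s : ℝ => Real.cos (s * α)) MeasureTheory.volume 0 1 := by
    apply Continuous.intervalIntegrable; fun_prop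
  have his2 : IntervalIntegrable (fun s : ℝ => Real.cot (α / 2) * Real.sin (s * α))
      MeasureTheory.volume 0 1 := by
    apply Continuous.intervalIntegrable; fun_prop
  have hval1 : (∫ s in (0:ℝ)..1,
      (ε * (β * α / 2)) * (Real.cot (α / 2) * Real.cos (s * α) + Real.sin (s * α))) = ε * β := by
    rw [intervalIntegral.integral_const_mul, intervalIntegral.integral_add hic his,
      intervalIntegral.integral_const_mul, my_int_cos hα0, my_int_sin hα0,
      Real.cot_eq_cos_div_sin]
    have hs2 : Real.sin α = 2 * Real.sin (α / 2) * Real.cos (α / 2) := by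
      rw [← Real.sin_two_mul]; ring_nf
    have hc2 : Real.cos α = 2 * Real.cos (α / 2) ^ 2 - 1 := by
      rw [← Real.cos_two_mul]; ring_nf
    have hpyth : Real.sin (α / 2) ^ 2 + Real.cos (α / 2) ^ 2 = 1 :=
      Real.sin_sq_add_cos_sq _
    rw [hs2, hc2]
    field_simp
    ring
  have hval2 : (∫ s in (0:ℝ)..1,
      (ε * (β * α / 2)) * (Real.cos (s * α) - Real.cot (α / 2) * Real.sin (s * α))) = 0 := by
    rw [intervalIntegral.integral_const_mul, intervalIntegral.integral_sub hic2 his2,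
      intervalIntegral.integral_const_mul, my_int_cos hα0, my_int_sin hα0,
      Real.cot_eq_cos_div_sin]
    have hs2 : Real.sin α = 2 * Real.sin (α / 2) * Real.cos (α / 2) := by
      rw [← Real.sin_two_mul]; ring_nf
    have hc2 : Real.cos α = 2 * Real.cos (α / 2) ^ 2 - 1 := by
      rw [← Real.cos_two_mul]; ring_nf
    have hpyth : Real.sin (α / 2) ^ 2 + Real.cos (α / 2) ^ 2 = 1 :=
      Real.sin_sq_add_cos_sq _
    rw [hs2, hc2]
    field_simp
    linear_combination (2 * ε * β * Real.cos (α / 2)) * hpyth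
  rw [hval1, hval2, zero_smul, add_zero]

end General3

section General4

open Asymptotics Topology

variable {𝔸 : Type*} [NormedRing 𝔸] [NormedAlgebra ℝ 𝔸] [CompleteSpace 𝔸] [NormOneClass 𝔸]

theorem key_general (u v w : 𝔸) (huv : ⁅u, v⁆ = w) (hvw : ⁅v, w⁆ = u) (hwu : ⁅w, u⁆ = v)
    (α β : ℝ) (hα : Real.sin (α / 2) ≠ 0) :
    (fun ε : ℝ =>
        exp (α • u) * exp ((ε * β) • v) -
          exp (α • u + (ε * β * α / 2) • (Real.cot (α / 2) • v + w)))
      =O[𝓝 0] fun ε : ℝ => ε ^ 2 := by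
  set A : 𝔸 := α • u with hA
  set m : 𝔸 := (β * α / 2) • (Real.cot (α / 2) • v + w) with hm
  rw [Asymptotics.isBigO_iff]
  refine ⟨Real.exp ‖A‖ * ((|β| * ‖v‖) ^ 2 * Real.exp (|β| * ‖v‖)) +
      ‖m‖ ^ 2 * (Real.exp ‖A‖ * Real.exp ‖A‖ *
        (Real.exp ‖A‖ * Real.exp ‖A‖ * Real.exp (‖A‖ + ‖m‖))), ?_⟩
  have hev : ∀ᶠ ε : ℝ in 𝓝 0, |ε| ≤ 1 := by
    filter_upwards [eventually_abs_sub_lt (0:ℝ) one_pos] with ε h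
    rw [sub_zero] at h
    exact h.le
  filter_upwards [hev] with ε hε
  have harg : α • u + (ε * β * α / 2) • (Real.cot (α / 2) • v + w) = A + ε • m := by
    rw [hm, smul_smul, show ε * (β * α / 2) = ε * β * α / 2 by ring]
  rw [harg]
  set y : 𝔸 := (ε * β) • v with hy
  have hEy : exp A * y = (ε * β) • (exp A * v) := mul_smul_comm _ _ _
  have hsplit : exp A * exp y - exp (A + ε • m) =
      exp A * (exp y - 1 - y) -
        (exp (A + ε • m) - exp A - (ε * β) • (exp A * v)) := by
    rw [← hEy]
    noncomm_ring
  rw [hsplit]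
  have hI1 := my_I1 u v w huv hwu α β hα ε
  rw [← hA, ← hm] at hI1
  have h2 : ‖exp (A + ε • m) - exp A - (ε * β) • (exp A * v)‖ ≤
      ‖ε • m‖ ^ 2 * (Real.exp ‖A‖ * Real.exp ‖A‖ *
        (Real.exp ‖A‖ * Real.exp ‖A‖ * Real.exp (‖A‖ + ‖ε • m‖))) := by
    have h := my_D3 A (ε • m)
    rwa [hI1] at h
  have h1 : ‖exp A * (exp y - 1 - y)‖ ≤ Real.exp ‖A‖ * (‖y‖ ^ 2 * Real.exp ‖y‖) := by
    refine (norm_mul_le _ _).trans ?_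
    exact mul_le_mul (my_norm_exp_le A) (my_Dz y) (norm_nonneg _) (Real.exp_nonneg _)
  have hynorm : ‖y‖ = |ε| * (|β| * ‖v‖) := by
    rw [hy, norm_smul, Real.norm_eq_abs, abs_mul, mul_assoc]
  have hyle : ‖y‖ ≤ |β| * ‖v‖ := by
    rw [hynorm]
    calc |ε| * (|β| * ‖v‖) ≤ 1 * (|β| * ‖v‖) := by gcongr
      _ = |β| * ‖v‖ := one_mul _
  have hmnorm : ‖ε • m‖ = |ε| * ‖m‖ := by rw [norm_smul, Real.norm_eq_abs]
  have hmle : ‖ε • m‖ ≤ ‖m‖ := by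
    rw [hmnorm]
    calc |ε| * ‖m‖ ≤ 1 * ‖m‖ := by gcongr
      _ = ‖m‖ := one_mul _
  have heps : ‖ε ^ 2‖ = ε ^ 2 := by
    rw [Real.norm_eq_abs, abs_of_nonneg (sq_nonneg ε)]
  rw [heps]
  have hB1 : Real.exp ‖A‖ * (‖y‖ ^ 2 * Real.exp ‖y‖) ≤
      ε ^ 2 * (Real.exp ‖A‖ * ((|β| * ‖v‖) ^ 2 * Real.exp (|β| * ‖v‖))) := by
    have hy2 : ‖y‖ ^ 2 = ε ^ 2 * (|β| * ‖v‖) ^ 2 := by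
      rw [hynorm, mul_pow, sq_abs]
    rw [hy2]
    rw [show Real.exp ‖A‖ * (ε ^ 2 * (|β| * ‖v‖) ^ 2 * Real.exp ‖y‖) =
      ε ^ 2 * (Real.exp ‖A‖ * ((|β| * ‖v‖) ^ 2 * Real.exp ‖y‖)) by ring]
    gcongr
  have hB2 : ‖ε • m‖ ^ 2 * (Real.exp ‖A‖ * Real.exp ‖A‖ *
        (Real.exp ‖A‖ * Real.exp ‖A‖ * Real.exp (‖A‖ + ‖ε • m‖))) ≤
      ε ^ 2 * (‖m‖ ^ 2 * (Real.exp ‖A‖ * Real.exp ‖A‖ *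
        (Real.exp ‖A‖ * Real.exp ‖A‖ * Real.exp (‖A‖ + ‖m‖)))) := by
    have hm2 : ‖ε • m‖ ^ 2 = ε ^ 2 * ‖m‖ ^ 2 := by
      rw [hmnorm, mul_pow, sq_abs]
    rw [hm2]
    rw [show ε ^ 2 * ‖m‖ ^ 2 * (Real.exp ‖A‖ * Real.exp ‖A‖ *
        (Real.exp ‖A‖ * Real.exp ‖A‖ * Real.exp (‖A‖ + ‖ε • m‖))) =
      ε ^ 2 * (‖m‖ ^ 2 * (Real.exp ‖A‖ * Real.exp ‖A‖ *
        (Real.exp ‖A‖ * Real.exp ‖A‖ * Real.exp (‖A‖ + ‖ε • m‖)))) by ring]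
    gcongr
  calc ‖exp A * (exp y - 1 - y) -
        (exp (A + ε • m) - exp A - (ε * β) • (exp A * v))‖ ≤
      ‖exp A * (exp y - 1 - y)‖ +
        ‖exp (A + ε • m) - exp A - (ε * β) • (exp A * v)‖ := norm_sub_le _ _
    _ ≤ Real.exp ‖A‖ * (‖y‖ ^ 2 * Real.exp ‖y‖) +
        ‖ε • m‖ ^ 2 * (Real.exp ‖A‖ * Real.exp ‖A‖ *
          (Real.exp ‖A‖ * Real.exp ‖A‖ * Real.exp (‖A‖ + ‖ε • m‖))) := add_le_add h1 h2
    _ ≤ ε ^ 2 * (Real.exp ‖A‖ * ((|β| * ‖v‖) ^ 2 * Real.exp (|β| * ‖v‖))) +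
        ε ^ 2 * (‖m‖ ^ 2 * (Real.exp ‖A‖ * Real.exp ‖A‖ *
          (Real.exp ‖A‖ * Real.exp ‖A‖ * Real.exp (‖A‖ + ‖m‖)))) := add_le_add hB1 hB2
    _ = (Real.exp ‖A‖ * ((|β| * ‖v‖) ^ 2 * Real.exp (|β| * ‖v‖)) +
        ‖m‖ ^ 2 * (Real.exp ‖A‖ * Real.exp ‖A‖ *
          (Real.exp ‖A‖ * Real.exp ‖A‖ * Real.exp (‖A‖ + ‖m‖)))) * ε ^ 2 := by ring

end General4

open scoped Matrix Topology

attribute [local instance] Matrix.normedAddCommGroup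

lemma my_sup_norm_le_linfty (M : Matrix (Fin 2) (Fin 2) ℂ) :
    ‖M‖ ≤ @norm _ (Matrix.linftyOpNormedAddCommGroup :
      NormedAddCommGroup (Matrix (Fin 2) (Fin 2) ℂ)).toNorm M := by
  have hdef := Matrix.linfty_opNorm_def M
  rw [Matrix.norm_le_iff]
  · intro i j
    calc ‖M i j‖ ≤ ∑ j' : Fin 2, ‖M i j'‖ :=
          Finset.single_le_sum (fun k _ => norm_nonneg (M i k)) (Finset.mem_univ j)
      _ = ((∑ j' : Fin 2, ‖M i j'‖₊ : NNReal) : ℝ) := by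
          push_cast
          rfl
      _ ≤ _ := by
          rw [hdef]
          exact_mod_cast NNReal.coe_le_coe.2
            (Finset.le_sup (f := fun i : Fin 2 => ∑ j' : Fin 2, ‖M i j'‖₊)
              (Finset.mem_univ i))
  · rw [hdef]
    positivity

/-- If `u, v, w` are 2×2 complex matrices with `⁅u,v⁆ = w`, `⁅v,w⁆ = u`,
`⁅w,u⁆ = v`, and `α, β` are real with `sin(α/2) ≠ 0`, then as `ε → 0`,
`exp(α•u) * exp((εβ)•v) - exp(α•u + (εβα/2)•(cot(α/2) • v + w)) = O(ε²)`. -/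
theorem su2_exp_perturb_orth (u v w : Matrix (Fin 2) (Fin 2) ℂ)
    (huv : ⁅u, v⁆ = w) (hvw : ⁅v, w⁆ = u) (hwu : ⁅w, u⁆ = v)
    (α β : ℝ) (hα : Real.sin (α / 2) ≠ 0) :
    (fun ε : ℝ =>
        NormedSpace.exp (α • u) * NormedSpace.exp ((ε * β) • v) -
          NormedSpace.exp
            (α • u + (ε * β * α / 2) • (Real.cot (α / 2) • v + w)))
      =O[𝓝 0] fun ε : ℝ => ε ^ 2 := by
  rw [Asymptotics.isBigO_iff]
  letI instR : NormedRing (Matrix (Fin 2) (Fin 2) ℂ) := Matrix.linftyOpNormedRing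
  letI instA : NormedAlgebra ℝ (Matrix (Fin 2) (Fin 2) ℂ) := Matrix.linftyOpNormedAlgebra
  haveI : @CompleteSpace (Matrix (Fin 2) (Fin 2) ℂ) instR.toUniformSpace :=
    FiniteDimensional.complete ℝ _
  have key := key_general u v w huv hvw hwu α β hα
  have hexp : (NormedSpace.exp : Matrix (Fin 2) (Fin 2) ℂ → Matrix (Fin 2) (Fin 2) ℂ) =
      NormedSpace.exp := rfl
  rw [Asymptotics.isBigO_iff] at key
  obtain ⟨c, hc⟩ := key
  refine ⟨c, ?_⟩
  filter_upwards [hc] with ε h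
  exact (my_sup_norm_le_linfty _).trans h
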